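/- Let ν be a compactly supported probability measure on ℝ with ∫ λ dν = 0, λ_max := max(supp ν) = 1, and suppose f(λ) := ν{x ≥ λ}^{1/n} is concave on (−∞,1) for some n ≥ 1. Then f(0) ≥ n/(n+1). -/

import Mathlib

open MeasureTheory Set
open scoped ENNReal

private lemma chord_ineq {g : ℝ → ℝ} (hg : ConcaveOn ℝ (Set.Iio (1:ℝ)) g)
    {x y z : ℝ} (hxy : x < y) (hyz : y < z) (hz1 : z < 1) :
    (z - y) * g x + (y - x) * g z ≤ (z - x) * g y := by
  have hx1 : x < 1 := by linarith
  have hxz : (0:ℝ) < z - x := by linarith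
  have h := hg.2 (Set.mem_Iio.mpr hx1) (Set.mem_Iio.mpr hz1)
      (show (0:ℝ) ≤ (z - y)/(z - x) by apply div_nonneg <;> linarith)
      (show (0:ℝ) ≤ (y - x)/(z - x) by apply div_nonneg <;> linarith)
      (by rw [← add_div, div_eq_one_iff_eq hxz.ne']; ring)
  have hpt : ((z - y)/(z - x)) • x + ((y - x)/(z - x)) • z = y := by
    rw [smul_eq_mul, smul_eq_mul]; field_simp; ring
  rw [hpt, smul_eq_mul, smul_eq_mul, div_mul_eq_mul_div, div_mul_eq_mul_div,
    ← add_div, div_le_iff₀ hxz] at h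
  linarith

private lemma integral_affine_pow (p q A B : ℝ) (hq : q ≠ 0) (m : ℕ) :
    ∫ x in A..B, (p + q * x) ^ m =
      ((p + q * B) ^ (m+1) - (p + q * A) ^ (m+1)) / (q * ((m:ℝ)+1)) := by
  have h : ∀ x ∈ Set.uIcc A B,
      HasDerivAt (fun y => (p + q*y)^(m+1) / (q*((m:ℝ)+1))) ((p + q*x)^m) x := by
    intro x _
    have h1 : HasDerivAt (fun y : ℝ => p + q*y) q x := by
      simpa using ((hasDerivAt_id x).const_mul q).const_add p
    have h2 : HasDerivAt (fun y => (p + q*y)^(m+1) / (q*((m:ℝ)+1)))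
        (((m+1:ℕ):ℝ) * (p + q*x)^(m+1-1) * q / (q*((m:ℝ)+1))) x :=
      (h1.pow (m+1)).div_const (q*((m:ℝ)+1))
    convert h2 using 1
    have hm : ((m:ℝ)+1) ≠ 0 := by positivity
    simp only [Nat.add_sub_cancel]
    push_cast
    field_simp
  rw [intervalIntegral.integral_eq_sub_of_hasDerivAt h
    ((Continuous.intervalIntegrable (by fun_prop) _ _))]
  rw [div_sub_div_same]

theorem concave_tail_value_at_zero
    (n : ℕ) (hn : 1 ≤ n)
    (ν : Measure ℝ) [IsProbabilityMeasure ν]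
    (h_upper : ν (Set.Ioi (1 : ℝ)) = 0)
    (h_max : ∀ ε : ℝ, 0 < ε → 0 < ν (Set.Ioi (1 - ε)))
    (h_lower : ∃ a : ℝ, ν (Set.Iio a) = 0)
    (hbar : ∫ x, x ∂ν = 0)
    (hconc : ConcaveOn ℝ (Set.Iio (1 : ℝ))
      (fun lam => (ν (Set.Ici lam)).toReal ^ (1 / (n : ℝ)))) :
    (n : ℝ) / ((n : ℝ) + 1) ≤ (ν (Set.Ici (0 : ℝ))).toReal ^ (1 / (n : ℝ)) := by
  classical
  obtain ⟨f, hconc2, hfdef⟩ : ∃ f : ℝ → ℝ, ConcaveOn ℝ (Set.Iio (1:ℝ)) f ∧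
      ∀ lam, f lam = (ν (Set.Ici lam)).toReal ^ (1 / (n : ℝ)) :=
    ⟨_, hconc, fun _ => rfl⟩
  rw [show (ν (Set.Ici (0:ℝ))).toReal ^ (1/(n:ℝ)) = f 0 from (hfdef 0).symm]
  -- basic numeric facts
  have hn0 : (0:ℝ) < n := by exact_mod_cast hn
  have hnne : (n:ℝ) ≠ 0 := ne_of_gt hn0
  have hnp : (0:ℝ) < (n:ℝ) + 1 := by linarith
  -- facts about the tail function
  have hFnn : ∀ lam : ℝ, 0 ≤ (ν (Set.Ici lam)).toReal := fun _ => ENNReal.toReal_nonneg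
  have hFle1 : ∀ lam : ℝ, (ν (Set.Ici lam)).toReal ≤ 1 := by
    intro lam
    simpa using ENNReal.toReal_mono ENNReal.one_ne_top (prob_le_one (μ := ν) (s := Set.Ici lam))
  have hfpow : ∀ lam : ℝ, f lam ^ n = (ν (Set.Ici lam)).toReal := by
    intro lam
    rw [hfdef lam]
    rw [← Real.rpow_natCast ((ν (Set.Ici lam)).toReal ^ (1/(n:ℝ))) n,
      ← Real.rpow_mul (hFnn lam), one_div, inv_mul_cancel₀ hnne, Real.rpow_one]
  have hfnn : ∀ lam : ℝ, 0 ≤ f lam := fun lam =>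
    (hfdef lam) ▸ Real.rpow_nonneg (hFnn lam) _
  have hfle1 : ∀ lam : ℝ, f lam ≤ 1 := fun lam =>
    (hfdef lam) ▸ Real.rpow_le_one (hFnn lam) (hFle1 lam) (by positivity)
  have hfanti : Antitone f := by
    intro x y hxy
    rw [hfdef x, hfdef y]
    exact Real.rpow_le_rpow (hFnn y)
      (ENNReal.toReal_mono (measure_ne_top ν _) (measure_mono (Set.Ici_subset_Ici.mpr hxy)))
      (by positivity)
  -- lower support bound
  obtain ⟨a, ha⟩ := h_lower
  obtain ⟨a₀, ha₀def⟩ : ∃ a₀ : ℝ, a₀ = min a (-1) := ⟨_, rfl⟩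
  have ha₀0 : ν (Set.Iio a₀) = 0 :=
    le_antisymm (le_trans (measure_mono (Set.Iio_subset_Iio (ha₀def ▸ min_le_left _ _)))
      ha.le) zero_le
  have ha₀neg : a₀ ≤ -1 := ha₀def ▸ min_le_right _ _
  obtain ⟨u, hudef⟩ : ∃ u : ℝ, u = -a₀ := ⟨_, rfl⟩
  have hu1 : 1 ≤ u := by rw [hudef]; linarith
  have hu0 : 0 < u := by linarith
  have hFa₀ : (ν (Set.Ici a₀)).toReal = 1 := by
    have h2 : (1:ℝ≥0∞) ≤ ν (Set.Ici a₀) := by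
      calc (1:ℝ≥0∞) = ν (Set.Iio a₀ ∪ Set.Ici a₀) := by rw [Set.Iio_union_Ici, measure_univ]
        _ ≤ ν (Set.Iio a₀) + ν (Set.Ici a₀) := measure_union_le _ _
        _ = ν (Set.Ici a₀) := by rw [ha₀0, zero_add]
    have h3 : ν (Set.Ici a₀) = 1 := le_antisymm prob_le_one h2
    rw [h3, ENNReal.toReal_one]
  have hfa₀ : f a₀ = 1 := by rw [hfdef a₀]; simp only [hFa₀, Real.one_rpow]
  -- complement formula
  have hcompl : ∀ x : ℝ, (ν (Set.Iio x)).toReal = 1 - (ν (Set.Ici x)).toReal := by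
    intro x
    have hu' : ν (Set.Iio x) + ν (Set.Ici x) = 1 := by
      rw [← measure_union (Set.Iio_disjoint_Ici le_rfl) measurableSet_Ici,
        Set.Iio_union_Ici, measure_univ]
    have := congrArg ENNReal.toReal hu'
    rw [ENNReal.toReal_add (measure_ne_top _ _) (measure_ne_top _ _), ENNReal.toReal_one] at this
    linarith
  -- trivial case : f 0 ≥ 1
  rcases le_or_gt 1 (f 0) with hb1 | hb1
  · calc (n:ℝ)/((n:ℝ)+1) ≤ 1 := by rw [div_le_one hnp]; linarith
      _ ≤ f 0 := hb1
  -- Case A : the value is attained again on (0,1)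
  by_cases hA : ∃ t₀ ∈ Set.Ioo (0:ℝ) 1, f 0 ≤ f t₀
  · exfalso
    obtain ⟨t₀, ht₀, hft₀⟩ := hA
    have hft₀' : f t₀ = f 0 := le_antisymm (hfanti ht₀.1.le) hft₀
    have hc := chord_ineq hconc2 (show a₀ < (0:ℝ) by linarith) ht₀.1 ht₀.2
    rw [hfa₀, hft₀'] at hc
    -- (t₀ - 0) * 1 + (0 - a₀) * f 0 ≤ (t₀ - a₀) * f 0
    have ht₀0 : 0 < t₀ := ht₀.1
    linarith [hc, mul_pos ht₀0 (show (0:ℝ) < 1 - f 0 by linarith)]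
  push_neg at hA
  -- Integral identity via layer cake
  have hid_int : Integrable (fun x : ℝ => x) ν := by
    have h1 : ∀ᵐ x ∂ν, a₀ ≤ x := by
      rw [ae_iff]
      have he : {x : ℝ | ¬ a₀ ≤ x} = Set.Iio a₀ := by ext x; simp [Set.mem_Iio, not_le]
      rw [he]; exact ha₀0
    have h2 : ∀ᵐ x ∂ν, x ≤ 1 := by
      rw [ae_iff]
      have he : {x : ℝ | ¬ x ≤ 1} = Set.Ioi 1 := by ext x; simp [Set.mem_Ioi, not_le]
      rw [he]; exact h_upper
    have hae : ∀ᵐ x ∂ν, ‖x‖ ≤ u := by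
      filter_upwards [h1, h2] with x hx1 hx2
      rw [Real.norm_eq_abs, abs_le]
      constructor <;> [linarith; linarith]
    exact (integrable_const u).mono' aestronglyMeasurable_id hae
  have hpos_int : Integrable (fun x : ℝ => max x 0) ν := hid_int.pos_part
  have hneg_int : Integrable (fun x : ℝ => max (-x) 0) ν := hid_int.neg.pos_part
  have hdiff : ∫ x, max x 0 ∂ν - ∫ x, max (-x) 0 ∂ν = 0 := by
    rw [← integral_sub hpos_int hneg_int]
    simpa only [max_zero_sub_max_neg_zero_eq_self] using hbar
  have LCp : ∫ x, max x 0 ∂ν = ∫ lam in Set.Ioi (0:ℝ), (ν (Set.Ioi lam)).toReal := by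
    rw [hpos_int.integral_eq_integral_meas_lt (ae_of_all _ fun x => le_max_right x 0)]
    refine setIntegral_congr_fun measurableSet_Ioi fun lam hlam => ?_
    have hlam0 : (0:ℝ) < lam := hlam
    have hset : {a : ℝ | lam < max a 0} = Set.Ioi lam := by
      ext x
      simp only [Set.mem_setOf_eq, Set.mem_Ioi, lt_max_iff]
      constructor
      · rintro (h | h)
        · exact h
        · linarith
      · exact Or.inl
    rw [hset]
    rfl
  have LCm : ∫ x, max (-x) 0 ∂ν = ∫ lam in Set.Ioi (0:ℝ), (ν (Set.Iio (-lam))).toReal := by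
    rw [hneg_int.integral_eq_integral_meas_lt (ae_of_all _ fun x => le_max_right (-x) 0)]
    refine setIntegral_congr_fun measurableSet_Ioi fun lam hlam => ?_
    have hlam0 : (0:ℝ) < lam := hlam
    have hset : {a : ℝ | lam < max (-a) 0} = Set.Iio (-lam) := by
      ext x
      simp only [Set.mem_setOf_eq, Set.mem_Iio, lt_max_iff]
      constructor
      · rintro (h | h)
        · linarith
        · linarith
      · intro h; left; linarith
    rw [hset]
    rfl
  have Ieq : ∫ lam in Set.Ioi (0:ℝ), (ν (Set.Ioi lam)).toReal
      = ∫ lam in Set.Ioi (0:ℝ), (ν (Set.Iio (-lam))).toReal := by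
    rw [← LCp, ← LCm]; linarith
  -- integrability of the two tail integrands
  have hle1' : ∀ (S : Set ℝ), (ν S).toReal ≤ 1 := fun S => by
    simpa using ENNReal.toReal_mono ENNReal.one_ne_top (prob_le_one (μ := ν) (s := S))
  have hintp : IntegrableOn (fun lam => (ν (Set.Ioi lam)).toReal) (Set.Ioi (0:ℝ)) := by
    have hanti : Antitone (fun lam : ℝ => (ν (Set.Ioi lam)).toReal) := fun x y hxy =>
      ENNReal.toReal_mono (measure_ne_top _ _) (measure_mono (Set.Ioi_subset_Ioi hxy))
    have h01 : IntegrableOn (fun lam => (ν (Set.Ioi lam)).toReal) (Set.Ioc (0:ℝ) 1) := by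
      apply Measure.integrableOn_of_bounded (M := 1) measure_Ioc_lt_top.ne
        hanti.measurable.aestronglyMeasurable
      refine ae_of_all _ fun x => ?_
      rw [Real.norm_eq_abs, abs_of_nonneg ENNReal.toReal_nonneg]
      exact hle1' _
    have h1i : IntegrableOn (fun lam => (ν (Set.Ioi lam)).toReal) (Set.Ioi (1:ℝ)) := by
      refine (integrableOn_congr_fun (g := fun _ => (0:ℝ)) (fun x hx => ?_)
        measurableSet_Ioi).mpr (integrableOn_zero)
      have : ν (Set.Ioi x) = 0 := measure_mono_null (Set.Ioi_subset_Ioi (le_of_lt hx)) h_upper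
      simp [this]
    have := h01.union h1i
    rwa [Set.Ioc_union_Ioi_eq_Ioi zero_le_one] at this
  have hintm : IntegrableOn (fun lam => (ν (Set.Iio (-lam))).toReal) (Set.Ioi (0:ℝ)) := by
    have hanti : Antitone (fun lam : ℝ => (ν (Set.Iio (-lam))).toReal) := fun x y hxy =>
      ENNReal.toReal_mono (measure_ne_top _ _) (measure_mono (Set.Iio_subset_Iio (by linarith)))
    have h01 : IntegrableOn (fun lam => (ν (Set.Iio (-lam))).toReal) (Set.Ioc (0:ℝ) u) := by
      apply Measure.integrableOn_of_bounded (M := 1) measure_Ioc_lt_top.ne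
        hanti.measurable.aestronglyMeasurable
      refine ae_of_all _ fun x => ?_
      rw [Real.norm_eq_abs, abs_of_nonneg ENNReal.toReal_nonneg]
      exact hle1' _
    have h1i : IntegrableOn (fun lam => (ν (Set.Iio (-lam))).toReal) (Set.Ioi u) := by
      refine (integrableOn_congr_fun (g := fun _ => (0:ℝ)) (fun x hx => ?_)
        measurableSet_Ioi).mpr (integrableOn_zero)
      have hx' : (u:ℝ) < x := hx
      have : ν (Set.Iio (-x)) = 0 :=
        measure_mono_null (Set.Iio_subset_Iio (by rw [hudef] at hx'; linarith)) ha₀0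
      simp [this]
    have := h01.union h1i
    rwa [Set.Ioc_union_Ioi_eq_Ioi hu0.le] at this
  -- the key inequality, for every t ∈ (0,1)
  have key : ∀ t : ℝ, t ∈ Set.Ioo (0:ℝ) 1 →
      ((n:ℝ)+1)*(1 - f 0) ≤ 1 + ((n:ℝ)+1)*(2*t) := by
    rintro t ⟨ht0, ht1⟩
    have hft : f t < f 0 := hA t ⟨ht0, ht1⟩
    obtain ⟨s, hsdef⟩ : ∃ s : ℝ, s = (f 0 - f t)/t := ⟨_, rfl⟩
    have hs : 0 < s := hsdef ▸ div_pos (by linarith) ht0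
    have hst : t * s = f 0 - f t := by
      rw [hsdef, mul_comm, div_mul_cancel₀ _ ht0.ne']
    -- secant bounds
    have hsec_left : ∀ lam : ℝ, lam < 0 → f lam ≤ f 0 - s*lam := by
      intro lam hlam
      have hc := chord_ineq hconc2 hlam ht0 ht1
      have h3 : t*s*lam = f 0 * lam - f t * lam := by
        rw [show t*s*lam = (t*s)*lam by ring, hst]; ring
      have h2 : t * f lam ≤ t * (f 0 - s*lam) := by linarith [hc, h3]
      exact le_of_mul_le_mul_left h2 ht0
    have hsec_right : ∀ lam : ℝ, t < lam → lam < 1 → f lam ≤ f 0 - s*lam := by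
      intro lam h1 h2
      have hc := chord_ineq hconc2 ht0 h1 h2
      have h3 : t*s*lam = f 0 * lam - f t * lam := by
        rw [show t*s*lam = (t*s)*lam by ring, hst]; ring
      have h4 : t * f lam ≤ t * (f 0 - s*lam) := by linarith [hc, h3]
      exact le_of_mul_le_mul_left h4 ht0
    -- nearly-continuity at 0 : f 0 - f t ≤ 2 t
    have hbft : f 0 - f t ≤ 2*t := by
      have hz1 : (1+t)/2 < 1 := by linarith
      have htz : t < (1+t)/2 := by linarith
      have hc := chord_ineq hconc2 ht0 htz hz1
      have h5 : ((1+t)/2)*(f 0 - f t) ≤ t * f 0 := by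
        linarith [hc, mul_nonneg ht0.le (hfnn ((1+t)/2))]
      linarith [h5, mul_nonneg ht0.le (show (0:ℝ) ≤ f 0 - f t by linarith),
        mul_nonneg ht0.le (show (0:ℝ) ≤ 1 - f 0 by linarith)]
    have hb0 : 0 < f 0 := lt_of_le_of_lt (hfnn t) hft
    -- lower bound on the negative-side integral
    obtain ⟨T, hTdef⟩ : ∃ T : ℝ, T = (1 - f 0)/s := ⟨_, rfl⟩
    have hT0 : 0 < T := hTdef ▸ div_pos (by linarith) hs
    have hbsT : f 0 + s*T = 1 := by
      rw [hTdef, mul_comm, div_mul_cancel₀ _ hs.ne']; ring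
    have LB1 : ∫ lam in Set.Ioc (0:ℝ) T, (1 - (f 0 + s*lam)^n)
        ≤ ∫ lam in Set.Ioc (0:ℝ) T, (ν (Set.Iio (-lam))).toReal := by
      apply setIntegral_mono_on
      · exact (Continuous.integrableOn_Ioc (by fun_prop))
      · exact hintm.mono_set Set.Ioc_subset_Ioi_self
      · exact measurableSet_Ioc
      · rintro lam ⟨hl0, hlT⟩
        have hml : -lam < 0 := by linarith
        have h1 : f (-lam) ≤ f 0 + s*lam := by
          have := hsec_left (-lam) hml; linarith [this]
        have h2 : (ν (Set.Ici (-lam))).toReal ≤ (f 0 + s*lam)^n := by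
          rw [← hfpow (-lam)]
          exact pow_le_pow_left₀ (hfnn _) h1 n
        rw [hcompl (-lam)]
        linarith
    have LB2 : ∫ lam in Set.Ioc (0:ℝ) T, (ν (Set.Iio (-lam))).toReal
        ≤ ∫ lam in Set.Ioi (0:ℝ), (ν (Set.Iio (-lam))).toReal := by
      apply setIntegral_mono_set hintm
      · exact ae_of_all _ fun x => ENNReal.toReal_nonneg
      · exact HasSubset.Subset.eventuallyLE Set.Ioc_subset_Ioi_self
    have LB3 : ∫ lam in Set.Ioc (0:ℝ) T, (1 - (f 0 + s*lam)^n)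
        = T - (1 - (f 0)^(n+1))/(s*((n:ℝ)+1)) := by
      rw [← intervalIntegral.integral_of_le hT0.le]
      rw [intervalIntegral.integral_sub intervalIntegrable_const
        ((Continuous.intervalIntegrable (by fun_prop) _ _))]
      rw [intervalIntegral.integral_const, integral_affine_pow (f 0) s 0 T hs.ne']
      rw [hbsT]
      simp
    -- upper bound on the positive-side integral
    obtain ⟨M, hMdef⟩ : ∃ M : ℝ, M = f 0/s := ⟨_, rfl⟩
    have hM0 : 0 < M := hMdef ▸ div_pos hb0 hs
    have hbsM : f 0 - s*M = 0 := by
      rw [hMdef, mul_comm, div_mul_cancel₀ _ hs.ne']; ring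
    have hsplit : ∫ lam in Set.Ioi (0:ℝ), (ν (Set.Ioi lam)).toReal
        = (∫ lam in Set.Ioc (0:ℝ) t, (ν (Set.Ioi lam)).toReal)
          + ∫ lam in Set.Ioi t, (ν (Set.Ioi lam)).toReal := by
      rw [← Set.Ioc_union_Ioi_eq_Ioi ht0.le]
      exact setIntegral_union Set.Ioc_disjoint_Ioi_same measurableSet_Ioi
        (hintp.mono_set Set.Ioc_subset_Ioi_self)
        (hintp.mono_set (Set.Ioi_subset_Ioi ht0.le))
    have UB1 : ∫ lam in Set.Ioc (0:ℝ) t, (ν (Set.Ioi lam)).toReal ≤ t := by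
      calc ∫ lam in Set.Ioc (0:ℝ) t, (ν (Set.Ioi lam)).toReal
          ≤ ∫ _lam in Set.Ioc (0:ℝ) t, (1:ℝ) := by
            apply setIntegral_mono_on (hintp.mono_set Set.Ioc_subset_Ioi_self)
              (integrableOn_const measure_Ioc_lt_top.ne) measurableSet_Ioc
            exact fun x _ => hle1' _
        _ = t := by simp [Real.volume_Ioc, ht0.le]
    have hφcont : Continuous (fun lam : ℝ => (max (f 0 - s*lam) 0)^n) := by fun_prop
    have hφnn : ∀ x : ℝ, 0 ≤ (max (f 0 - s*x) 0)^n := fun x => by positivity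
    have hφzero : ∀ x : ℝ, M < x → (max (f 0 - s*x) 0)^n = 0 := by
      intro x hx
      have : f 0 - s*x ≤ 0 := by
        linarith [hbsM, mul_pos hs (sub_pos.mpr hx)]
      rw [max_eq_right this, zero_pow (by omega : n ≠ 0)]
    have hφint : IntegrableOn (fun lam : ℝ => (max (f 0 - s*lam) 0)^n) (Set.Ioi (0:ℝ)) := by
      have h01 : IntegrableOn (fun lam : ℝ => (max (f 0 - s*lam) 0)^n)
          (Set.Ioc (0:ℝ) M) := hφcont.integrableOn_Ioc
      have h1i : IntegrableOn (fun lam : ℝ => (max (f 0 - s*lam) 0)^n) (Set.Ioi M) := by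
        refine (integrableOn_congr_fun (g := fun _ => (0:ℝ)) (fun x hx => hφzero x hx)
          measurableSet_Ioi).mpr (integrableOn_zero)
      have := h01.union h1i
      rwa [Set.Ioc_union_Ioi_eq_Ioi hM0.le] at this
    have UB2 : ∫ lam in Set.Ioi t, (ν (Set.Ioi lam)).toReal
        ≤ ∫ lam in Set.Ioi t, (max (f 0 - s*lam) 0)^n := by
      apply setIntegral_mono_on (hintp.mono_set (Set.Ioi_subset_Ioi ht0.le))
        (hφint.mono_set (Set.Ioi_subset_Ioi ht0.le)) measurableSet_Ioi
      intro lam hlam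
      have htlam : t < lam := hlam
      rcases lt_or_ge lam 1 with h1 | h1
      · have hfl : f lam ≤ f 0 - s*lam := hsec_right lam htlam h1
        calc (ν (Set.Ioi lam)).toReal ≤ (ν (Set.Ici lam)).toReal :=
              ENNReal.toReal_mono (measure_ne_top _ _) (measure_mono Set.Ioi_subset_Ici_self)
          _ = f lam ^ n := (hfpow lam).symm
          _ ≤ (max (f 0 - s*lam) 0)^n := pow_le_pow_left₀ (hfnn lam) (le_max_of_le_left hfl) n
      · have hz : ν (Set.Ioi lam) = 0 := measure_mono_null (Set.Ioi_subset_Ioi h1) h_upper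
        rw [hz]
        simpa using hφnn lam
    have UB3 : ∫ lam in Set.Ioi t, (max (f 0 - s*lam) 0)^n
        ≤ ∫ lam in Set.Ioi (0:ℝ), (max (f 0 - s*lam) 0)^n := by
      apply setIntegral_mono_set hφint
      · exact ae_of_all _ fun x => hφnn x
      · exact HasSubset.Subset.eventuallyLE (Set.Ioi_subset_Ioi ht0.le)
    have UB4 : ∫ lam in Set.Ioi (0:ℝ), (max (f 0 - s*lam) 0)^n
        = (f 0)^(n+1)/(s*((n:ℝ)+1)) := by
      rw [← Set.Ioc_union_Ioi_eq_Ioi hM0.le]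
      rw [setIntegral_union Set.Ioc_disjoint_Ioi_same measurableSet_Ioi
        (hφcont.integrableOn_Ioc)
        ((integrableOn_congr_fun (g := fun _ => (0:ℝ)) (fun x hx => hφzero x hx)
          measurableSet_Ioi).mpr (integrableOn_zero))]
      have hz : ∫ lam in Set.Ioi M, (max (f 0 - s*lam) 0)^n = 0 := by
        rw [setIntegral_congr_fun measurableSet_Ioi
          (fun x (hx : x ∈ Set.Ioi M) => hφzero x hx)]
        simp
      rw [hz, add_zero]
      have heq : ∀ lam ∈ Set.Ioc (0:ℝ) M, (max (f 0 - s*lam) 0)^n = (f 0 + (-s)*lam)^n := by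
        intro lam hlam
        have h1 : 0 ≤ f 0 - s*lam := by
          linarith [hbsM, mul_nonneg hs.le (sub_nonneg.mpr hlam.2)]
        rw [max_eq_left h1]
        ring_nf
      rw [setIntegral_congr_fun measurableSet_Ioc heq,
        ← intervalIntegral.integral_of_le hM0.le,
        integral_affine_pow (f 0) (-s) 0 M (neg_ne_zero.mpr hs.ne')]
      have h0 : f 0 + (-s)*M = 0 := by linarith [hbsM]
      rw [h0, zero_pow (by omega : n + 1 ≠ 0)]
      rw [show f 0 + (-s)*0 = f 0 by ring]
      rw [zero_sub, show (-s*((n:ℝ)+1)) = -(s*((n:ℝ)+1)) by ring, neg_div_neg_eq]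
    -- combine
    have hchain : T - (1 - (f 0)^(n+1))/(s*((n:ℝ)+1))
        ≤ t + (f 0)^(n+1)/(s*((n:ℝ)+1)) := by
      have c1 := LB1
      have c2 := LB2
      have c3 := hsplit
      have c4 := UB1
      have c5 := le_trans UB2 UB3
      rw [UB4] at c5
      rw [LB3] at c1
      linarith [Ieq]
    have hpos : (0:ℝ) < s*((n:ℝ)+1) := by positivity
    have hmul := mul_le_mul_of_nonneg_right hchain hpos.le
    rw [sub_mul, add_mul, div_mul_cancel₀ _ hpos.ne', div_mul_cancel₀ _ hpos.ne'] at hmul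
    have e1 : T*(s*((n:ℝ)+1)) = (1 - f 0)*((n:ℝ)+1) := by
      have hTs : T * s = 1 - f 0 := by rw [hTdef, div_mul_cancel₀ _ hs.ne']
      calc T*(s*((n:ℝ)+1)) = (T*s)*((n:ℝ)+1) := by ring
        _ = (1 - f 0)*((n:ℝ)+1) := by rw [hTs]
    have e2 : t*(s*((n:ℝ)+1)) = (f 0 - f t)*((n:ℝ)+1) := by
      rw [show t*(s*((n:ℝ)+1)) = (t*s)*((n:ℝ)+1) by ring, hst]
    linarith [hmul, e1, e2, mul_le_mul_of_nonneg_right hbft hnp.le]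
  -- conclude
  have hfin : ((n:ℝ)+1)*(1 - f 0) ≤ 1 := by
    by_contra hcon
    push_neg at hcon
    have hc0 : 0 < ((n:ℝ)+1)*(1 - f 0) - 1 := by linarith
    obtain ⟨c, hcdef⟩ : ∃ c : ℝ, c = ((n:ℝ)+1)*(1 - f 0) - 1 := ⟨_, rfl⟩
    have hc0' : 0 < c := hcdef ▸ hc0
    obtain ⟨t, htdef⟩ : ∃ t : ℝ, t = min (1/2) (c/(4*((n:ℝ)+1))) := ⟨_, rfl⟩
    have ht0 : 0 < t := htdef ▸ lt_min (by norm_num) (by positivity)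
    have ht1 : t < 1 := htdef ▸ lt_of_le_of_lt (min_le_left _ _) (by norm_num)
    have hk := key t ⟨ht0, ht1⟩
    have htc : t ≤ c/(4*((n:ℝ)+1)) := htdef ▸ min_le_right _ _
    have h6 : ((n:ℝ)+1)*(2*t) ≤ c/2 := by
      have h7 : ((n:ℝ)+1)*(2*(c/(4*((n:ℝ)+1)))) = c/2 := by field_simp; ring
      linarith [h7, mul_le_mul_of_nonneg_left htc
        (show (0:ℝ) ≤ ((n:ℝ)+1)*2 by positivity)]
    rw [hcdef] at hc0' h6
    linarith
  rw [div_le_iff₀ hnp]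
  linarith [hfin]
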